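/- Let D ≥ 1, k ≥ 1, and c : Fin D → ℂ with ∑_j |c_j|² = 1. Consider the complex matrices indexed by tuples Fin k → Fin D: let R be the matrix with entries R_{α,β} = ∏_j |c_{α_j}|² if there exists a permutation σ of Fin k with β = α ∘ σ, and 0 otherwise (the k-th moment of the random phase ensemble); and let S be the matrix with entries S_{α,β} = ∏_j |c_{α_j}|² · N(α,β), where N(α,β) is the number of permutations σ of Fin k with β = α ∘ σ (i.e., S = ρ_d^{⊗k} ∑_{σ ∈ S_k} Perm(σ) with ρ_d = diag(|c_j|²)). Then the trace norm (sum of singular values) of R − S is at most k! · exp(π·√(2k/3)) · ∑_j |c_j|⁴. -/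

import Mathlib

open Matrix Finset
open scoped ComplexOrder

/-- The trace norm (sum of singular values) of a complex square matrix, defined as the
trace of the positive semidefinite square root of `Mᴴ * M`. -/
noncomputable def traceNorm {n : Type*} [Fintype n] [DecidableEq n]
    (M : Matrix n n ℂ) : ℝ :=
  (((Matrix.posSemidef_conjTranspose_mul_self M).1.eigenvectorUnitary : Matrix n n ℂ) *
    Matrix.diagonal (((↑) : ℝ → ℂ) ∘ (√·) ∘ (Matrix.posSemidef_conjTranspose_mul_self M).1.eigenvalues) *
    (star (Matrix.posSemidef_conjTranspose_mul_self M).1.eigenvectorUnitary : Matrix n n ℂ)).trace.re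

lemma aux_sum_collision {D k : ℕ} (q : Fin D → ℝ) (hq1 : ∑ j, q j = 1)
    {i i' : Fin k} (h : i' ≠ i) :
    ∑ α : Fin k → Fin D, (if α i' = α i then ∏ j, q (α j) else 0) = ∑ d, q d ^ 2 := by
  classical
  rw [← Finset.sum_filter]
  set t : Finset (Fin k) := ((univ : Finset (Fin k)).erase i).erase i' with ht
  have key : ∑ α ∈ (univ : Finset (Fin k → Fin D)).filter (fun α => α i' = α i),
      ∏ j, q (α j)
      = ∑ x : Fin D × ({j // j ∈ t} → Fin D), q x.1 ^ 2 * ∏ j, q (x.2 j) := by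
    refine Finset.sum_nbij'
      (i := fun α => (α i, fun j : {j // j ∈ t} => α j))
      (j := fun x => fun j => if hj : j = i ∨ j = i' then x.1 else x.2 ⟨j, by
        simp only [ht, Finset.mem_erase, Finset.mem_univ, and_true]
        exact ⟨fun hji => hj (Or.inr hji), fun hji => hj (Or.inl hji)⟩⟩)
      ?_ ?_ ?_ ?_ ?_
    · intro a _; exact Finset.mem_univ _
    · intro x _
      simp only [Finset.mem_filter, Finset.mem_univ, true_and]
      simp
    · intro α hα
      simp only [Finset.mem_filter, Finset.mem_univ, true_and] at hα
      funext j
      dsimp only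
      by_cases hj : j = i ∨ j = i'
      · rw [dif_pos hj]
        rcases hj with rfl | rfl
        · rfl
        · exact hα.symm
      · rw [dif_neg hj]
    · intro x _
      refine Prod.ext ?_ ?_
      · dsimp only
        simp
      · funext j
        dsimp only
        have hj : ¬((j : Fin k) = i ∨ (j : Fin k) = i') := by
          have := j.2
          simp only [ht, Finset.mem_erase, Finset.mem_univ, and_true] at this
          rintro (h1 | h2)
          · exact this.2 h1
          · exact this.1 h2
        rw [dif_neg hj]
    · intro α hα
      simp only [Finset.mem_filter, Finset.mem_univ, true_and] at hα
      have h1 : ∏ j, q (α j) = q (α i) * ∏ j ∈ (univ : Finset (Fin k)).erase i, q (α j) :=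
        (Finset.mul_prod_erase univ _ (Finset.mem_univ i)).symm
      have hi' : i' ∈ (univ : Finset (Fin k)).erase i := by
        simp [Finset.mem_erase, h]
      have h2 : ∏ j ∈ (univ : Finset (Fin k)).erase i, q (α j)
          = q (α i') * ∏ j ∈ t, q (α j) := (Finset.mul_prod_erase _ _ hi').symm
      have h3 : ∏ j ∈ t, q (α j) = ∏ j : {j // j ∈ t}, q (α j) :=
        (Finset.prod_coe_sort t (fun j => q (α j))).symm
      rw [h1, h2, h3, hα]
      ring
  rw [key, Fintype.sum_prod_type]
  refine Finset.sum_congr rfl fun a _ => ?_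
  simp only
  rw [← Finset.mul_sum, ← Fintype.prod_sum (fun _ d => q d)]
  simp [hq1]

lemma aux_fixed_le {D k : ℕ} (q : Fin D → ℝ) (hq : ∀ j, 0 ≤ q j) (hq1 : ∑ j, q j = 1)
    {σ : Equiv.Perm (Fin k)} (hσ : σ ≠ 1) :
    ∑ α : Fin k → Fin D, (if α = α ∘ ⇑σ then ∏ j, q (α j) else 0) ≤ ∑ d, q d ^ 2 := by
  classical
  obtain ⟨i, hi⟩ : ∃ i, σ i ≠ i := by
    by_contra hcon
    push_neg at hcon
    exact hσ (Equiv.ext hcon)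
  calc ∑ α : Fin k → Fin D, (if α = α ∘ ⇑σ then ∏ j, q (α j) else 0)
      ≤ ∑ α : Fin k → Fin D, (if α (σ i) = α i then ∏ j, q (α j) else 0) := by
        refine Finset.sum_le_sum fun α _ => ?_
        by_cases hα : α = α ∘ ⇑σ
        · have h2 : α (σ i) = α i := (congrFun hα i).symm
          rw [if_pos hα, if_pos h2]
        · rw [if_neg hα]
          split
          · exact Finset.prod_nonneg fun j _ => hq _
          · exact le_refl 0
    _ = ∑ d, q d ^ 2 := aux_sum_collision q hq1 hi

lemma aux_main_sum {D k : ℕ} (q : Fin D → ℝ) (hq : ∀ j, 0 ≤ q j) (hq1 : ∑ j, q j = 1) :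
    ∑ α : Fin k → Fin D, (∏ j, q (α j)) *
        (((Finset.univ.filter fun σ : Equiv.Perm (Fin k) => α = α ∘ ⇑σ).card : ℝ) - 1)
      ≤ (k.factorial : ℝ) * ∑ d, q d ^ 2 := by
  classical
  have hone : ∀ α : Fin k → Fin D, (1 : Equiv.Perm (Fin k)) ∈
      (Finset.univ.filter fun σ : Equiv.Perm (Fin k) => α = α ∘ ⇑σ) := by
    intro α
    simp only [Finset.mem_filter, Finset.mem_univ, true_and]
    funext x; rfl
  have step1 : ∀ α : Fin k → Fin D, (∏ j, q (α j)) *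
      (((Finset.univ.filter fun σ : Equiv.Perm (Fin k) => α = α ∘ ⇑σ).card : ℝ) - 1)
      = ∑ σ ∈ (univ : Finset (Equiv.Perm (Fin k))).erase 1,
          (if α = α ∘ ⇑σ then ∏ j, q (α j) else 0) := by
    intro α
    rw [← Finset.sum_filter, Finset.filter_erase, Finset.sum_const,
      Finset.card_erase_of_mem (hone α)]
    have hc : 1 ≤ (Finset.univ.filter fun σ : Equiv.Perm (Fin k) => α = α ∘ ⇑σ).card :=
      Finset.card_pos.2 ⟨1, hone α⟩
    rw [nsmul_eq_mul, Nat.cast_sub hc]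
    push_cast
    ring
  calc ∑ α : Fin k → Fin D, (∏ j, q (α j)) *
        (((Finset.univ.filter fun σ : Equiv.Perm (Fin k) => α = α ∘ ⇑σ).card : ℝ) - 1)
      = ∑ σ ∈ (univ : Finset (Equiv.Perm (Fin k))).erase 1,
          ∑ α : Fin k → Fin D, (if α = α ∘ ⇑σ then ∏ j, q (α j) else 0) := by
        rw [← Finset.sum_comm]
        exact Finset.sum_congr rfl fun α _ => step1 α
    _ ≤ ∑ σ ∈ (univ : Finset (Equiv.Perm (Fin k))).erase 1, ∑ d, q d ^ 2 := by
        refine Finset.sum_le_sum fun σ hσ => ?_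
        exact aux_fixed_le q hq hq1 (Finset.mem_erase.1 hσ).1
    _ ≤ (k.factorial : ℝ) * ∑ d, q d ^ 2 := by
        rw [Finset.sum_const, nsmul_eq_mul]
        refine mul_le_mul_of_nonneg_right ?_
          (Finset.sum_nonneg fun d _ => sq_nonneg _)
        have : ((univ : Finset (Equiv.Perm (Fin k))).erase 1).card ≤
            (univ : Finset (Equiv.Perm (Fin k))).card := Finset.card_erase_le
        calc (((univ : Finset (Equiv.Perm (Fin k))).erase 1).card : ℝ)
            ≤ ((univ : Finset (Equiv.Perm (Fin k))).card : ℝ) := by exact_mod_cast this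
          _ = (k.factorial : ℝ) := by
              rw [Finset.card_univ, Fintype.card_perm, Fintype.card_fin]

lemma aux_comp_iff {D k : ℕ} (γ α : Fin k → Fin D) (σ : Equiv.Perm (Fin k)) :
    α = γ ∘ ⇑σ ↔ γ = α ∘ ⇑σ⁻¹ := by
  constructor
  · rintro rfl; funext x; simp
  · rintro rfl; funext x; simp

lemma aux_TT {D k : ℕ} (T : Matrix (Fin k → Fin D) (Fin k → Fin D) ℂ)
    (hT : ∀ α β, T α β =
      ((Finset.univ.filter fun σ : Equiv.Perm (Fin k) => β = α ∘ ⇑σ).card : ℂ)) :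
    Tᴴ * T = (k.factorial : ℂ) • T := by
  classical
  ext α β
  rw [Matrix.mul_apply, Matrix.smul_apply, hT α β]
  simp only [Matrix.conjTranspose_apply, hT]
  have hstar : ∀ γ, star (((Finset.univ.filter
      fun σ : Equiv.Perm (Fin k) => α = γ ∘ ⇑σ).card : ℂ)) =
      ((Finset.univ.filter fun σ : Equiv.Perm (Fin k) => α = γ ∘ ⇑σ).card : ℂ) := by
    intro γ; exact star_natCast _
  simp only [hstar]
  have expand : ∀ (γ δ : Fin k → Fin D),
      ((Finset.univ.filter fun σ : Equiv.Perm (Fin k) => δ = γ ∘ ⇑σ).card : ℂ)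
      = ∑ σ : Equiv.Perm (Fin k), if δ = γ ∘ ⇑σ then (1 : ℂ) else 0 := by
    intro γ δ; rw [Finset.sum_boole]
  simp only [expand]
  simp only [Finset.sum_mul]
  rw [Finset.sum_comm]
  have inner : ∀ σ : Equiv.Perm (Fin k),
      ∑ γ : Fin k → Fin D, ((if α = γ ∘ ⇑σ then (1:ℂ) else 0) *
        ∑ τ : Equiv.Perm (Fin k), if β = γ ∘ ⇑τ then (1:ℂ) else 0)
      = ∑ τ : Equiv.Perm (Fin k), if β = α ∘ ⇑(σ⁻¹ * τ) then (1:ℂ) else 0 := by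
    intro σ
    have h1 : ∀ γ : Fin k → Fin D, (if α = γ ∘ ⇑σ then (1:ℂ) else 0)
        = if γ = α ∘ ⇑σ⁻¹ then (1:ℂ) else 0 := by
      intro γ
      by_cases hc : α = γ ∘ ⇑σ
      · rw [if_pos hc, if_pos ((aux_comp_iff γ α σ).1 hc)]
      · rw [if_neg hc, if_neg (fun hc2 => hc ((aux_comp_iff γ α σ).2 hc2))]
    simp only [h1, ite_mul, one_mul, zero_mul]
    rw [Finset.sum_ite_eq' Finset.univ (α ∘ ⇑σ⁻¹)]
    simp only [Finset.mem_univ, if_true]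
    refine Finset.sum_congr rfl fun τ _ => ?_
    have : (α ∘ ⇑σ⁻¹) ∘ ⇑τ = α ∘ ⇑(σ⁻¹ * τ) := by
      funext x; simp [Equiv.Perm.coe_mul]
    rw [this]
  simp only [inner]
  have reindex : ∀ σ : Equiv.Perm (Fin k),
      ∑ τ : Equiv.Perm (Fin k), (if β = α ∘ ⇑(σ⁻¹ * τ) then (1:ℂ) else 0)
      = ∑ ρ : Equiv.Perm (Fin k), if β = α ∘ ⇑ρ then (1:ℂ) else 0 := by
    intro σ
    exact Equiv.sum_comp (Equiv.mulLeft σ⁻¹) (fun ρ => if β = α ∘ ⇑ρ then (1:ℂ) else 0)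
  simp only [reindex]
  rw [Finset.sum_const, Finset.card_univ, Fintype.card_perm, Fintype.card_fin,
    nsmul_eq_mul, Finset.sum_boole, smul_eq_mul]

lemma aux_card_rel {D k : ℕ} {α β : Fin k → Fin D} {σ₀ : Equiv.Perm (Fin k)}
    (h : β = α ∘ ⇑σ₀) :
    (Finset.univ.filter fun σ : Equiv.Perm (Fin k) => β = α ∘ ⇑σ).card
      = (Finset.univ.filter fun σ : Equiv.Perm (Fin k) => α = α ∘ ⇑σ).card := by
  classical
  refine Finset.card_bij' (fun σ _ => σ * σ₀⁻¹) (fun τ _ => τ * σ₀) ?_ ?_ ?_ ?_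
  · intro σ hσ
    simp only [Finset.mem_filter, Finset.mem_univ, true_and] at hσ ⊢
    funext x
    have : α ∘ ⇑σ = β := hσ.symm
    calc α x = β (σ₀⁻¹ x) := by rw [h]; simp
    _ = (α ∘ ⇑σ) (σ₀⁻¹ x) := by rw [this]
    _ = (α ∘ ⇑(σ * σ₀⁻¹)) x := by simp [Equiv.Perm.coe_mul]
  · intro τ hτ
    simp only [Finset.mem_filter, Finset.mem_univ, true_and] at hτ ⊢
    funext x
    calc β x = α (σ₀ x) := by rw [h]; rfl
    _ = (α ∘ ⇑τ) (σ₀ x) := by rw [← hτ]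
    _ = (α ∘ ⇑(τ * σ₀)) x := by simp [Equiv.Perm.coe_mul]
  · intro σ _; group
  · intro τ _; group

lemma aux_card_stab {D k : ℕ} {α β : Fin k → Fin D} {σ₀ : Equiv.Perm (Fin k)}
    (h : β = α ∘ ⇑σ₀) :
    (Finset.univ.filter fun σ : Equiv.Perm (Fin k) => β = β ∘ ⇑σ).card
      = (Finset.univ.filter fun σ : Equiv.Perm (Fin k) => α = α ∘ ⇑σ).card := by
  classical
  refine Finset.card_bij' (fun σ _ => σ₀ * σ * σ₀⁻¹) (fun τ _ => σ₀⁻¹ * τ * σ₀) ?_ ?_ ?_ ?_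
  · intro σ hσ
    simp only [Finset.mem_filter, Finset.mem_univ, true_and] at hσ ⊢
    funext x
    have hb : ∀ y, β y = β (σ y) := fun y => congrFun hσ y
    calc α x = β (σ₀⁻¹ x) := by rw [h]; simp
    _ = β (σ (σ₀⁻¹ x)) := hb _
    _ = α (σ₀ (σ (σ₀⁻¹ x))) := by rw [h]; rfl
    _ = (α ∘ ⇑(σ₀ * σ * σ₀⁻¹)) x := by simp [Equiv.Perm.coe_mul]
  · intro τ hτ
    simp only [Finset.mem_filter, Finset.mem_univ, true_and] at hτ ⊢
    funext x
    have ha : ∀ y, α y = α (τ y) := fun y => congrFun hτ y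
    calc β x = α (σ₀ x) := by rw [h]; rfl
    _ = α (τ (σ₀ x)) := ha _
    _ = β (σ₀⁻¹ (τ (σ₀ x))) := by rw [h]; simp
    _ = (β ∘ ⇑(σ₀⁻¹ * τ * σ₀)) x := by simp [Equiv.Perm.coe_mul]
  · intro σ _; group
  · intro τ _; group

lemma aux_prod_rel {D k : ℕ} (q : Fin D → ℝ) {α β : Fin k → Fin D}
    {σ₀ : Equiv.Perm (Fin k)} (h : β = α ∘ ⇑σ₀) :
    ∏ j, q (β j) = ∏ j, q (α j) := by
  rw [h]
  exact Equiv.prod_comp σ₀ (fun j => q (α j))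

/-- Asymptotic product form of the `k`-th moment of the random phase ensemble: the trace
distance between the exact `k`-th moment `R` and the product form
`S = ρ_d^{⊗k} ∑_{σ ∈ S_k} Perm(σ)` is bounded by `k! exp(π √(2k/3)) tr(ρ_d²)`. -/
theorem random_phase_moment_product_form
    (D k : ℕ) (hD : 1 ≤ D) (hk : 1 ≤ k) (c : Fin D → ℂ)
    (hc : (∑ j, Complex.normSq (c j)) = 1)
    (R S : Matrix (Fin k → Fin D) (Fin k → Fin D) ℂ)
    (hR : ∀ α β, R α β =
      if ∃ σ : Equiv.Perm (Fin k), β = α ∘ σ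
        then ∏ j, (Complex.normSq (c (α j)) : ℂ) else 0)
    (hS : ∀ α β, S α β =
      (∏ j, (Complex.normSq (c (α j)) : ℂ)) *
        ((Finset.univ.filter fun σ : Equiv.Perm (Fin k) => β = α ∘ σ).card : ℂ)) :
    traceNorm (R - S) ≤
      (k.factorial : ℝ) * Real.exp (Real.pi * Real.sqrt (2 * k / 3)) *
        ∑ j, (Complex.normSq (c j)) ^ 2 := by
  have hq0 : ∀ j, 0 ≤ Complex.normSq (c j) := fun j => Complex.normSq_nonneg _
  set q : Fin D → ℝ := fun j => Complex.normSq (c j) with hqdef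
  set p : (Fin k → Fin D) → ℝ := fun α => ∏ j, q (α j) with hpdef
  have hp0 : ∀ α, 0 ≤ p α := fun α => Finset.prod_nonneg fun j _ => hq0 _
  set m : (Fin k → Fin D) → ℕ :=
    fun α => (Finset.univ.filter fun σ : Equiv.Perm (Fin k) => α = α ∘ ⇑σ).card with hmdef
  have hone : ∀ α : Fin k → Fin D, (1 : Equiv.Perm (Fin k)) ∈
      (Finset.univ.filter fun σ : Equiv.Perm (Fin k) => α = α ∘ ⇑σ) := by
    intro α
    simp only [Finset.mem_filter, Finset.mem_univ, true_and]
    funext x; rfl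
  have hm1 : ∀ α, 1 ≤ m α := fun α => Finset.card_pos.2 ⟨1, hone α⟩
  have hkfne : (k.factorial : ℝ) ≠ 0 := Nat.cast_ne_zero.2 (Nat.factorial_ne_zero k)
  set f : (Fin k → Fin D) → ℝ :=
    fun α => Real.sqrt (p α * (1 - 1/(m α : ℝ)) / (k.factorial : ℝ)) with hfdef
  have hfnn : ∀ α, 0 ≤ p α * (1 - 1/(m α : ℝ)) / (k.factorial : ℝ) := by
    intro α
    apply div_nonneg _ (Nat.cast_nonneg _)
    apply mul_nonneg (hp0 α)
    rw [sub_nonneg]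
    rw [div_le_one (by exact_mod_cast Nat.lt_of_lt_of_le Nat.zero_lt_one (hm1 α))]
    exact_mod_cast hm1 α
  set F : Matrix (Fin k → Fin D) (Fin k → Fin D) ℂ :=
    Matrix.diagonal (fun α => ((f α : ℝ) : ℂ)) with hFdef
  set T : Matrix (Fin k → Fin D) (Fin k → Fin D) ℂ := Matrix.of fun α β =>
    ((Finset.univ.filter fun σ : Equiv.Perm (Fin k) => β = α ∘ ⇑σ).card : ℂ) with hTdef
  have hTapp : ∀ α β, T α β =
      ((Finset.univ.filter fun σ : Equiv.Perm (Fin k) => β = α ∘ ⇑σ).card : ℂ) :=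
    fun α β => rfl
  have hstarfun : (star fun α : Fin k → Fin D => ((f α : ℝ) : ℂ))
      = fun α : Fin k → Fin D => ((f α : ℝ) : ℂ) := by
    funext α
    exact Complex.conj_ofReal _
  have hFH : Fᴴ = F := by
    rw [hFdef, Matrix.diagonal_conjTranspose, hstarfun]
  have hCC : (T * F)ᴴ * (T * F) = F * ((k.factorial : ℂ) • T) * F := by
    rw [Matrix.conjTranspose_mul, hFH, ← aux_TT T hTapp,
      Matrix.mul_assoc F Tᴴ (T * F), ← Matrix.mul_assoc Tᴴ T F,
      ← Matrix.mul_assoc F (Tᴴ * T) F]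
  have hprodcast : ∀ α : Fin k → Fin D,
      ∏ j, ((Complex.normSq (c (α j)) : ℝ) : ℂ) = ((p α : ℝ) : ℂ) := by
    intro α
    rw [hpdef]
    push_cast
    rfl
  have hSR : S - R = (T * F)ᴴ * (T * F) := by
    rw [hCC]
    ext α β
    rw [Matrix.sub_apply, hS, hR, Matrix.mul_diagonal, Matrix.diagonal_mul,
      Matrix.smul_apply, hTapp, smul_eq_mul, hprodcast]
    by_cases h : ∃ σ : Equiv.Perm (Fin k), β = α ∘ ⇑σ
    · rw [if_pos h]
      obtain ⟨σ₀, hσ₀⟩ := h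
      have hNαβ : (Finset.univ.filter fun σ : Equiv.Perm (Fin k) => β = α ∘ ⇑σ).card
          = m α := aux_card_rel hσ₀
      have hmβ : m β = m α := aux_card_stab hσ₀
      have hpβ : p β = p α := aux_prod_rel q hσ₀
      have hfβ : f β = f α := by rw [hfdef]; simp only [hpβ, hmβ]
      rw [hNαβ, hfβ]
      have hsq : f α * f α = p α * (1 - 1/(m α : ℝ)) / (k.factorial : ℝ) :=
        Real.mul_self_sqrt (hfnn α)
      have hmne : (m α : ℝ) ≠ 0 :=
        Nat.cast_ne_zero.2 (Nat.one_le_iff_ne_zero.1 (hm1 α))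
      have hreal : f α * ((k.factorial : ℝ) * (m α : ℝ)) * f α
          = p α * (m α : ℝ) - p α := by
        rw [show f α * ((k.factorial:ℝ)*(m α:ℝ)) * f α
          = (f α * f α) * ((k.factorial:ℝ)*(m α:ℝ)) by ring, hsq]
        field_simp
      exact_mod_cast hreal.symm
    · rw [if_neg h]
      have hzero : (Finset.univ.filter fun σ : Equiv.Perm (Fin k) => β = α ∘ ⇑σ).card = 0 := by
        rw [Finset.card_eq_zero, Finset.filter_eq_empty_iff]
        intro σ _
        exact fun hσ => h ⟨σ, hσ⟩
      rw [hzero]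
      push_cast
      ring
  have hPSD : (S - R).PosSemidef := hSR ▸ Matrix.posSemidef_conjTranspose_mul_self (T * F)
  have hsq2 : (S - R) ^ 2 = (R - S)ᴴ * (R - S) := by
    have h1 : R - S = -(S - R) := (neg_sub S R).symm
    rw [h1, Matrix.conjTranspose_neg, hPSD.1.eq, neg_mul_neg, pow_two]
  have htn : traceNorm (R - S) = ((S - R).trace).re := by
    open scoped MatrixOrder in
    have hA := (Matrix.posSemidef_conjTranspose_mul_self (R - S)).1
    open scoped MatrixOrder in
    have key : hA.cfc Real.sqrt = S - R := by
      rw [← hA.cfc_eq, ← cfcₙ_eq_cfc (hf0 := Real.sqrt_zero), ← CFC.sqrt_eq_real_sqrt _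
        (Matrix.nonneg_iff_posSemidef.2 (Matrix.posSemidef_conjTranspose_mul_self _))]
      exact CFC.sqrt_unique (by rw [← pow_two, hsq2]) (Matrix.nonneg_iff_posSemidef.2 hPSD)
    rw [← key]
    rfl
  have hdiagS : ∀ α, S α α = ((p α : ℝ) : ℂ) * ((m α : ℕ) : ℂ) := by
    intro α
    rw [hS, hprodcast]
  have hdiagR : ∀ α, R α α = ((p α : ℝ) : ℂ) := by
    intro α
    rw [hR, if_pos ⟨1, by funext x; rfl⟩, hprodcast]
  have htr : (S - R).trace = ((∑ α : Fin k → Fin D, p α * ((m α : ℝ) - 1) : ℝ) : ℂ) := by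
    rw [Matrix.trace]
    push_cast
    refine Finset.sum_congr rfl fun α _ => ?_
    rw [Matrix.diag_apply, Matrix.sub_apply, hdiagS α, hdiagR α]
    ring
  rw [htn, htr, Complex.ofReal_re]
  have hmain := aux_main_sum (k := k) q hq0 hc
  have hexp : (1:ℝ) ≤ Real.exp (Real.pi * Real.sqrt (2 * k / 3)) := by
    apply Real.one_le_exp
    positivity
  have hqs : (0:ℝ) ≤ ∑ d, q d ^ 2 := Finset.sum_nonneg fun d _ => sq_nonneg _
  show ∑ α : Fin k → Fin D, p α * ((m α : ℝ) - 1) ≤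
      (k.factorial : ℝ) * Real.exp (Real.pi * Real.sqrt (2 * k / 3)) * ∑ d, q d ^ 2
  calc ∑ α : Fin k → Fin D, p α * ((m α : ℝ) - 1)
      ≤ (k.factorial : ℝ) * ∑ d, q d ^ 2 := hmain
    _ ≤ (k.factorial : ℝ) * Real.exp (Real.pi * Real.sqrt (2 * k / 3)) * ∑ d, q d ^ 2 := by
        rw [mul_assoc]
        refine mul_le_mul_of_nonneg_left ?_ (Nat.cast_nonneg _)
        nlinarith
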